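/- Let H ∈ ℝ^{n×m} be a real matrix, and suppose W₁ ∈ ℝ^{n×n} and W₂ ∈ ℝ^{m×m} are such that the block matrix [[W₁, H], [Hᵀ, W₂]] ∈ ℝ^{(n+m)×(n+m)} is positive semidefinite. Then ½(trace(W₁) + trace(W₂)) ≥ trace((Hᵀ H)^{1/2}), where (Hᵀ H)^{1/2} is the positive semidefinite square root of the positive semidefinite matrix Hᵀ H. -/

import Mathlib

open Matrix

open scoped ComplexOrder in
/-- The positive semidefinite square root of a positive semidefinite matrix
(the definition `Matrix.PosSemidef.sqrt` of the older Mathlib, removed since). -/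
noncomputable def Matrix.PosSemidef.sqrt {n : Type*} [Fintype n] [DecidableEq n] {𝕜 : Type*}
    [RCLike 𝕜] {A : Matrix n n 𝕜} (hA : A.PosSemidef) : Matrix n n 𝕜 :=
  hA.1.eigenvectorUnitary.1 * diagonal ((↑) ∘ (√·) ∘ hA.1.eigenvalues) *
  (star hA.1.eigenvectorUnitary : Matrix n n 𝕜)

/-- `Hᵀ H` is positive semidefinite. -/
theorem transpose_mul_self_posSemidef {n m : ℕ} (H : Matrix (Fin n) (Fin m) ℝ) :
    (Hᵀ * H).PosSemidef := by
  simpa [Matrix.conjTranspose_eq_transpose_of_trivial] using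
    Matrix.posSemidef_conjTranspose_mul_self H

lemma psd_trace_nonneg {k : Type*} [Fintype k] [DecidableEq k] {M : Matrix k k ℝ}
    (h : M.PosSemidef) : 0 ≤ M.trace := by
  rw [Matrix.trace]
  refine Finset.sum_nonneg fun i _ => ?_
  have := h.dotProduct_mulVec_nonneg (Pi.single i 1)
  simpa [Matrix.mulVec, dotProduct, Pi.single_apply, Matrix.diag] using this

open scoped MatrixOrder in
lemma psd_trace_mul_nonneg {k : Type*} [Fintype k] [DecidableEq k]
    {A B : Matrix k k ℝ} (hA : A.PosSemidef) (hB : B.PosSemidef) :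
    0 ≤ (A * B).trace := by
  have h1 : A * B = A * CFC.sqrt B * CFC.sqrt B := by rw [mul_assoc, CFC.sqrt_mul_sqrt_self B hB.nonneg]
  rw [h1, Matrix.trace_mul_cycle]
  have h2 : CFC.sqrt B * A * CFC.sqrt B = (CFC.sqrt B)ᴴ * A * CFC.sqrt B := by
    rw [(CFC.sqrt_nonneg B).posSemidef.1.eq]
  rw [h2]
  exact psd_trace_nonneg (hA.conjTranspose_mul_mul_same _)

/-- If the block matrix `[[W₁, H], [Hᵀ, W₂]]` is positive semidefinite, then
`½(trace W₁ + trace W₂) ≥ trace ((Hᵀ H)^{1/2})`, the latter being the nuclear norm of `H`. -/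
theorem nuclear_norm_le_of_block_posSemidef {n m : ℕ} (H : Matrix (Fin n) (Fin m) ℝ)
    (W₁ : Matrix (Fin n) (Fin n) ℝ) (W₂ : Matrix (Fin m) (Fin m) ℝ)
    (hPSD : (Matrix.fromBlocks W₁ H Hᵀ W₂).PosSemidef) :
    (transpose_mul_self_posSemidef H).sqrt.trace ≤ (W₁.trace + W₂.trace) / 2 := by
  classical
  set hA := transpose_mul_self_posSemidef H with hAdef
  set V : Matrix (Fin m) (Fin m) ℝ := (hA.1.eigenvectorUnitary : Matrix (Fin m) (Fin m) ℝ) with hVdef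
  set μ : Fin m → ℝ := hA.1.eigenvalues with hmudef
  have hμ0 : ∀ i, 0 ≤ μ i := fun i => hA.eigenvalues_nonneg i
  -- unitarity
  have hV1 : V * Vᵀ = 1 := by
    have := (Matrix.mem_unitaryGroup_iff).mp hA.1.eigenvectorUnitary.2
    simpa [Matrix.star_eq_conjTranspose, Matrix.conjTranspose_eq_transpose_of_trivial] using this
  have hV2 : Vᵀ * V = 1 := by
    have := (Matrix.mem_unitaryGroup_iff').mp hA.1.eigenvectorUnitary.2
    simpa [Matrix.star_eq_conjTranspose, Matrix.conjTranspose_eq_transpose_of_trivial] using this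
  -- diagonalization
  have hdiag : Vᵀ * (Hᵀ * H) * V = diagonal μ := by
    have := hA.1.conjStarAlgAut_star_eigenvectorUnitary
    simpa [Unitary.conjStarAlgAut_apply, star_star, Matrix.star_eq_conjTranspose, Matrix.conjTranspose_eq_transpose_of_trivial,
      RCLike.ofReal_real_eq_id] using this
  -- sqrt formula and trace
  have hsqrt : hA.sqrt = V * diagonal (fun i => Real.sqrt (μ i)) * Vᵀ := by
    rw [Matrix.PosSemidef.sqrt]
    simp [Matrix.star_eq_conjTranspose, Matrix.conjTranspose_eq_transpose_of_trivial,
      RCLike.ofReal_real_eq_id, Function.comp]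
    rfl
  have htr_sqrt : hA.sqrt.trace = ∑ i, Real.sqrt (μ i) := by
    rw [hsqrt, Matrix.trace_mul_cycle, hV2, one_mul, Matrix.trace_diagonal]
  -- the partial isometry
  set d : Fin m → ℝ := fun i => if μ i = 0 then 0 else (Real.sqrt (μ i))⁻¹ with hddef
  set U : Matrix (Fin n) (Fin m) ℝ := H * V * diagonal d with hUdef
  have hUt : Uᵀ = diagonal d * (Vᵀ * Hᵀ) := by
    rw [hUdef]
    simp [Matrix.transpose_mul, Matrix.diagonal_transpose, Matrix.mul_assoc]
  have hUtU : Uᵀ * U = diagonal (fun i => if μ i = 0 then 0 else 1) := by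
    have h1 : Uᵀ * U = diagonal d * (Vᵀ * (Hᵀ * H) * V) * diagonal d := by
      rw [hUt, hUdef]; simp only [Matrix.mul_assoc]
    rw [h1, hdiag, diagonal_mul_diagonal, diagonal_mul_diagonal]
    refine congrArg Matrix.diagonal (funext fun i => ?_)
    by_cases h : μ i = 0
    · simp [hddef, h]
    · have hmu : Real.sqrt (μ i) * Real.sqrt (μ i) = μ i := Real.mul_self_sqrt (hμ0 i)
      simp only [hddef, h, if_false]
      have harr : (Real.sqrt (μ i))⁻¹ * μ i * (Real.sqrt (μ i))⁻¹
          = μ i / (Real.sqrt (μ i) * Real.sqrt (μ i)) := by ring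
      rw [harr, hmu, div_self h]
  have hUHV : (Uᵀ * (H * V)).trace = ∑ i, Real.sqrt (μ i) := by
    have h1 : Uᵀ * (H * V) = diagonal d * (Vᵀ * (Hᵀ * H) * V) := by
      rw [hUt]; simp only [Matrix.mul_assoc]
    rw [h1, hdiag, diagonal_mul_diagonal, Matrix.trace_diagonal]
    refine Finset.sum_congr rfl fun i _ => ?_
    by_cases h : μ i = 0
    · simp [hddef, h]
    · simp only [hddef, h, if_false]
      have harr : (Real.sqrt (μ i))⁻¹ * μ i = μ i / Real.sqrt (μ i) := by ring
      rw [harr, Real.div_sqrt]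
  -- projection
  obtain ⟨P, hPdef⟩ : ∃ P : Matrix (Fin n) (Fin n) ℝ, P = U * Uᵀ := ⟨_, rfl⟩
  have hUe : U * diagonal (fun i => if μ i = 0 then (0:ℝ) else 1) = U := by
    rw [hUdef, Matrix.mul_assoc, diagonal_mul_diagonal]
    have hde : (fun i => d i * if μ i = 0 then (0:ℝ) else 1) = d := by
      funext i
      by_cases h : μ i = 0 <;> simp [Pi.mul_apply, hddef, h]
    rw [hde]
  have hPP : P * P = P := by
    calc P * P = U * (Uᵀ * U) * Uᵀ := by rw [hPdef]; simp only [Matrix.mul_assoc]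
    _ = P := by rw [hUtU, hUe, hPdef]
  have hPt : Pᵀ = P := by rw [hPdef]; simp [Matrix.transpose_mul]
  have h1P : (1 - P).PosSemidef := by
    have h := transpose_mul_self_posSemidef (1 - P)
    have ht : (1 - P)ᵀ = 1 - P := by simp [Matrix.transpose_sub, hPt]
    have hm : (1 - P) * (1 - P) = 1 - P := by
      simp only [Matrix.sub_mul, Matrix.mul_sub, hPP, Matrix.one_mul, Matrix.mul_one]
      abel
    rwa [ht, hm] at h
  -- W₁ is PSD
  have hW₁ : W₁.PosSemidef := by
    have h := hPSD.submatrix Sum.inl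
    have he : (fromBlocks W₁ H Hᵀ W₂).submatrix Sum.inl Sum.inl = W₁ := by
      ext i j; simp [Matrix.fromBlocks]
    rwa [he] at h
  -- key inequality from the block PSD
  have heq : (Matrix.fromRows U (-V))ᴴ * (fromBlocks W₁ H Hᵀ W₂) * Matrix.fromRows U (-V)
      = Uᵀ * (W₁ * U) - Uᵀ * (H * V) - Vᵀ * (Hᵀ * U) + Vᵀ * (W₂ * V) := by
    have e1 : (Matrix.fromRows U (-V))ᴴ = Matrix.fromCols Uᵀ (-Vᵀ) := by
      rw [Matrix.conjTranspose_fromRows_eq_fromCols_conjTranspose]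
      simp [Matrix.conjTranspose_eq_transpose_of_trivial]
    rw [e1, Matrix.mul_assoc, Matrix.fromBlocks_mul_fromRows, Matrix.fromCols_mul_fromRows]
    simp only [Matrix.mul_add, Matrix.mul_neg, Matrix.neg_mul, Matrix.mul_assoc]
    abel
  have hpsd2 := hPSD.conjTranspose_mul_mul_same (Matrix.fromRows U (-V))
  rw [heq] at hpsd2
  have htrkey := psd_trace_nonneg hpsd2
  rw [Matrix.trace_add, Matrix.trace_sub, Matrix.trace_sub] at htrkey
  have htt : (Vᵀ * (Hᵀ * U)).trace = (Uᵀ * (H * V)).trace := by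
    rw [← Matrix.trace_transpose (Uᵀ * (H * V))]
    congr 1
    simp [Matrix.transpose_mul, Matrix.mul_assoc]
  -- trace bounds
  have hW2tr : (Vᵀ * (W₂ * V)).trace = W₂.trace := by
    rw [← Matrix.mul_assoc, Matrix.trace_mul_cycle, hV1, Matrix.one_mul]
  have hW1tr : (Uᵀ * (W₁ * U)).trace ≤ W₁.trace := by
    have h := psd_trace_mul_nonneg h1P hW₁
    have he2 : (Uᵀ * (W₁ * U)).trace = (P * W₁).trace := by
      rw [← Matrix.mul_assoc, Matrix.trace_mul_cycle, hPdef]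
    rw [Matrix.sub_mul, Matrix.one_mul, Matrix.trace_sub] at h
    linarith
  linarith [htrkey, htt, hW2tr, hW1tr, hUHV, htr_sqrt]
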